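/- For all real x > 0, the Gamma function satisfies √(2π) x^(x−1/2) e^(−x) < Γ(x) < √(2π) x^(x−1/2) e^(−x) e^(1/(12x)). -/

import Mathlib

open Real Filter Finset Set
open scoped Topology



noncomputable def SG (y : ℝ) : ℝ := (y + 1/2) * Real.log (1 + y⁻¹) - 1

lemma SG_hasSum {y : ℝ} (hy : 0 < y) :
    HasSum (fun k : ℕ => (1 : ℝ) / (2 * (k : ℝ) + 3) * ((1 / (2 * y + 1)) ^ 2) ^ (k + 1))
      (SG y) := by
  have hy1 : (2 : ℝ) * y + 1 ≠ 0 := by positivity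
  set f : ℕ → ℝ := fun k => (1 : ℝ) / (2 * (k : ℝ) + 1) * ((1 / (2 * y + 1)) ^ 2) ^ k with hf
  have hsg : (fun k : ℕ => (1 : ℝ) / (2 * (k : ℝ) + 3) * ((1 / (2 * y + 1)) ^ 2) ^ (k + 1))
      = fun k => f (k + 1) := by
    ext k; simp only [hf]; push_cast; ring_nf
  rw [hsg, hasSum_nat_add_iff (f := f) 1]
  have h := (hasSum_log_one_add_inv hy).mul_left (y + 1/2)
  convert h using 1
  · rfl
  · ext k
    simp only [hf]
    rw [← pow_mul]
    have hk : (2 : ℝ) * (k : ℝ) + 1 ≠ 0 := by positivity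
    rw [pow_succ (1 / (2 * y + 1)) (2 * k)]
    field_simp
  · simp only [hf, Finset.range_one, Finset.sum_singleton, Nat.cast_zero, SG]
    norm_num


lemma SG_pos {y : ℝ} (hy : 0 < y) : 0 < SG y := by
  have h := le_hasSum (SG_hasSum hy) 0 (fun j _ => by positivity)
  refine lt_of_lt_of_le ?_ h
  positivity

lemma SG_lt {y : ℝ} (hy : 0 < y) : SG y < 1 / (12 * y * (y + 1)) := by
  set q : ℝ := (1 / (2 * y + 1)) ^ 2 with hq
  have hq0 : 0 < q := by positivity
  have hq1 : q < 1 := by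
    rw [hq, one_div, inv_pow]
    exact inv_lt_one_of_one_lt₀ (one_lt_pow₀ (by nlinarith) two_ne_zero)
  have hgeo : HasSum (fun k : ℕ => q / 3 * q ^ k) (q / 3 * (1 - q)⁻¹) :=
    (hasSum_geometric_of_lt_one hq0.le hq1).mul_left (q / 3)
  have hle : ∀ k : ℕ, (1 : ℝ) / (2 * (k : ℝ) + 3) * q ^ (k + 1) ≤ q / 3 * q ^ k := by
    intro k
    have h2 : q / 3 * q ^ k = 1 / 3 * q ^ (k + 1) := by ring
    rw [h2]
    apply mul_le_mul_of_nonneg_right _ (pow_nonneg hq0.le (k + 1))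
    apply one_div_le_one_div_of_le (by norm_num)
    have : (0 : ℝ) ≤ (k : ℝ) := Nat.cast_nonneg k
    linarith
  have hi : (1 : ℝ) / (2 * (1 : ℕ) + 3) * q ^ (1 + 1) < q / 3 * q ^ (1 : ℕ) := by
    have h2 : q / 3 * q ^ (1 : ℕ) = 1 / 3 * q ^ 2 := by ring
    push_cast
    rw [h2]
    have : (0 : ℝ) < q ^ 2 := by positivity
    nlinarith
  have hlt : SG y < q / 3 * (1 - q)⁻¹ := by
    rw [← (SG_hasSum hy).tsum_eq, ← hgeo.tsum_eq]
    exact Summable.tsum_lt_tsum hle (by exact_mod_cast hi) (SG_hasSum hy).summable hgeo.summable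
  have hfin : q / 3 * (1 - q)⁻¹ = 1 / (12 * y * (y + 1)) := by
    have h1 : (2 : ℝ) * y + 1 ≠ 0 := by positivity
    have h2 : (1 : ℝ) - q ≠ 0 := by linarith
    have h3 : (1 : ℝ) - q = (4*y^2+4*y)/(2*y+1)^2 := by
      rw [hq]; field_simp; ring
    rw [hq, h3, inv_div]
    field_simp
    ring
  rw [← hfin]; exact hlt


noncomputable def SMu (x : ℝ) : ℝ := ∑' n : ℕ, SG (x + n)

lemma SG_le_tele {x : ℝ} (hx : 0 < x) (i : ℕ) :
    SG (x + i) ≤ 1 / (12 * (x + i)) - 1 / (12 * (x + (i + 1 : ℕ))) := by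
  have hxi : (0:ℝ) < x + i := by positivity
  have h := SG_lt hxi
  have he : 1 / (12 * (x + i)) - 1 / (12 * (x + (i + 1 : ℕ)))
      = 1 / (12 * (x + i) * ((x + i) + 1)) := by
    have h1 : (0:ℝ) < x + i + 1 := by positivity
    push_cast
    field_simp
    ring
  rw [he]; exact h.le

lemma SMu_summable {x : ℝ} (hx : 0 < x) : Summable (fun n : ℕ => SG (x + n)) := by
  apply summable_of_sum_range_le (c := 1 / (12 * x))
    (fun n => (SG_pos (by positivity)).le)
  intro n
  calc ∑ i ∈ Finset.range n, SG (x + i)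
      ≤ ∑ i ∈ Finset.range n, (1 / (12 * (x + i)) - 1 / (12 * (x + (i + 1 : ℕ)))) :=
        Finset.sum_le_sum fun i _ => SG_le_tele hx i
    _ = 1 / (12 * (x + (0:ℕ))) - 1 / (12 * (x + (n:ℕ))) :=
        Finset.sum_range_sub' (fun i : ℕ => 1 / (12 * (x + (i:ℝ)))) n
    _ ≤ 1 / (12 * x) := by
        push_cast
        have h1 : (0:ℝ) < 12 * (x + n) := by positivity
        have h2 : (0:ℝ) ≤ 1 / (12 * (x + n)) := by positivity
        simp only [add_zero]
        linarith

lemma SMu_pos {x : ℝ} (hx : 0 < x) : 0 < SMu x := by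
  have h := Summable.le_tsum (SMu_summable hx) 0 (fun j _ => (SG_pos (by positivity)).le)
  have h0 : 0 < SG (x + (0:ℕ)) := SG_pos (by positivity)
  exact lt_of_lt_of_le h0 h

lemma tendsto_tele {x : ℝ} (hx : 0 < x) :
    Filter.Tendsto (fun n : ℕ => 1 / (12 * (x + n))) atTop (nhds 0) := by
  have h : Filter.Tendsto (fun n : ℕ => 12 * (x + (n:ℝ))) atTop atTop := by
    apply Filter.Tendsto.const_mul_atTop (by norm_num)
    exact tendsto_atTop_add_const_left _ x tendsto_natCast_atTop_atTop
  simpa only [one_div, Pi.inv_def] using h.inv_tendsto_atTop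

lemma tele_hasSum {x : ℝ} (hx : 0 < x) :
    HasSum (fun n : ℕ => 1 / (12 * (x + n)) - 1 / (12 * (x + (n + 1 : ℕ)))) (1 / (12 * x)) := by
  have hnn : ∀ i : ℕ, 0 ≤ 1 / (12 * (x + i)) - 1 / (12 * (x + (i + 1 : ℕ))) := by
    intro i
    have := SG_le_tele hx i
    have := (SG_pos (show (0:ℝ) < x + i by positivity)).le
    linarith
  rw [hasSum_iff_tendsto_nat_of_nonneg hnn]
  have heq : ∀ n : ℕ, ∑ i ∈ Finset.range n, (1 / (12 * (x + i)) - 1 / (12 * (x + (i + 1 : ℕ))))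
      = 1 / (12 * x) - 1 / (12 * (x + n)) := by
    intro n
    have := Finset.sum_range_sub' (fun i : ℕ => 1 / (12 * (x + (i:ℝ)))) n
    simpa using this
  simp only [heq]
  have := (tendsto_tele hx).const_sub (1 / (12 * x))
  simpa using this

lemma SMu_lt {x : ℝ} (hx : 0 < x) : SMu x < 1 / (12 * x) := by
  rw [show (1 : ℝ) / (12 * x) = ∑' n : ℕ, (1 / (12 * (x + n)) - 1 / (12 * (x + (n + 1 : ℕ))))
    from ((tele_hasSum hx).tsum_eq).symm]
  apply Summable.tsum_lt_tsum (i := 0) (fun i => SG_le_tele hx i) _ (SMu_summable hx)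
    (tele_hasSum hx).summable
  have h := SG_lt (show (0:ℝ) < x + (0:ℕ) by positivity)
  have he : 1 / (12 * (x + (0:ℕ))) - 1 / (12 * (x + (0 + 1 : ℕ)))
      = 1 / (12 * (x + (0:ℕ)) * ((x + (0:ℕ)) + 1)) := by
    push_cast
    have h1 : (0:ℝ) < x + 1 := by positivity
    field_simp
    ring
  rw [he]
  exact h

lemma SMu_rec {x : ℝ} (hx : 0 < x) : SMu x = SG x + SMu (x + 1) := by
  have h := Summable.tsum_eq_zero_add (SMu_summable hx)
  unfold SMu
  rw [h]
  congr 1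
  · norm_num
  · apply tsum_congr
    intro n
    congr 1
    push_cast
    ring


lemma SG_nat (m : ℕ) : SG ((m : ℝ) + 1)
    = Real.log (Stirling.stirlingSeq (m + 1)) - Real.log (Stirling.stirlingSeq (m + 2)) := by
  have h1 := SG_hasSum (show (0:ℝ) < (m:ℝ) + 1 by positivity)
  have h2 := Stirling.log_stirlingSeq_diff_hasSum m
  apply h1.unique
  convert h2 using 2 with k
  push_cast
  ring_nf

lemma SMu_one : SMu 1 = 1 - Real.log (2 * π) / 2 := by
  have hsum := SMu_summable one_pos
  have htendsto := hsum.hasSum.tendsto_sum_nat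
  have heq : ∀ n : ℕ, ∑ i ∈ Finset.range n, SG (1 + (i:ℝ))
      = Real.log (Stirling.stirlingSeq 1) - Real.log (Stirling.stirlingSeq (n + 1)) := by
    intro n
    have := Finset.sum_range_sub' (fun i : ℕ => Real.log (Stirling.stirlingSeq (i + 1))) n
    rw [← this]
    apply Finset.sum_congr rfl
    intro i _
    rw [show (1:ℝ) + (i:ℝ) = (i:ℝ) + 1 by ring, SG_nat i]
  have hlim : Filter.Tendsto (fun n : ℕ => Real.log (Stirling.stirlingSeq 1)
      - Real.log (Stirling.stirlingSeq (n + 1))) atTop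
      (nhds (Real.log (Stirling.stirlingSeq 1) - Real.log (Real.sqrt π))) := by
    apply Filter.Tendsto.const_sub
    have hc : ContinuousAt Real.log (Real.sqrt π) :=
      Real.continuousAt_log (by positivity)
    exact hc.tendsto.comp (Stirling.tendsto_stirlingSeq_sqrt_pi.comp (tendsto_add_atTop_nat 1))
  have : SMu 1 = Real.log (Stirling.stirlingSeq 1) - Real.log (Real.sqrt π) := by
    apply tendsto_nhds_unique _ hlim
    simpa only [heq, SMu] using htendsto
  rw [this, Stirling.stirlingSeq_one, Real.log_div (Real.exp_ne_zero 1) (by positivity),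
    Real.log_exp, Real.log_sqrt (by positivity : (0:ℝ) ≤ π),
    Real.log_sqrt (by norm_num : (0:ℝ) ≤ 2), Real.log_mul (by norm_num) (by positivity)]
  ring


lemma convexOn_of_tendsto {s : Set ℝ} {F : ℝ → ℝ} {f : ℕ → ℝ → ℝ}
    (hs : Convex ℝ s) (hf : ∀ n, ConvexOn ℝ s (f n))
    (h : ∀ x ∈ s, Filter.Tendsto (fun n => f n x) atTop (nhds (F x))) :
    ConvexOn ℝ s F := by
  refine ⟨hs, fun x hx y hy a b ha hb hab => ?_⟩
  have hmem : a • x + b • y ∈ s := hs hx hy ha hb hab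
  refine le_of_tendsto_of_tendsto' (h _ hmem)
    (((h x hx).const_mul a).add ((h y hy).const_mul b)) (fun n => ?_)
  simpa [smul_eq_mul] using (hf n).2 hx hy ha hb hab

lemma convexOn_sum_range {s : Set ℝ} (hs : Convex ℝ s) {f : ℕ → ℝ → ℝ}
    (hf : ∀ k, ConvexOn ℝ s (f k)) (N : ℕ) :
    ConvexOn ℝ s (fun x => ∑ k ∈ Finset.range N, f k x) := by
  induction N with
  | zero => simpa using convexOn_const 0 hs
  | succ n ih =>
      simp only [Finset.sum_range_succ]
      exact ih.add (hf n)

lemma convexOn_term (k : ℕ) :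
    ConvexOn ℝ (Set.Ioi (0:ℝ)) (fun x => (1:ℝ) / (2 * (k:ℝ) + 3) * ((1 / (2 * x + 1)) ^ 2) ^ (k + 1)) := by
  have hz := convexOn_zpow (𝕜 := ℝ) (-(2 * (k:ℤ) + 2))
  let g : ℝ →ᵃ[ℝ] ℝ := (2 : ℝ) • AffineMap.id ℝ ℝ + AffineMap.const ℝ ℝ 1
  have hg : ∀ z : ℝ, g z = 2 * z + 1 := fun _ => rfl
  have hcomp := hz.comp_affineMap g
  have hsub : Set.Ioi (0:ℝ) ⊆ g ⁻¹' (Set.Ioi (0:ℝ)) := by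
    intro x hx
    simp only [Set.mem_preimage, Set.mem_Ioi, hg] at *
    linarith
  have h2 := (hcomp.subset hsub (convex_Ioi 0)).smul
    (show (0:ℝ) ≤ 1 / (2 * (k:ℝ) + 3) by positivity)
  apply h2.congr
  intro x hx
  simp only [Set.mem_Ioi] at hx
  have hx1 : (0:ℝ) < 2 * x + 1 := by positivity
  simp only [Pi.smul_apply, Function.comp_apply, hg, smul_eq_mul]
  rw [show (-(2*(k:ℤ)+2)) = -((2*(k+1) : ℕ) : ℤ) by push_cast; ring, zpow_neg, zpow_natCast]
  rw [← pow_mul]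
  simp [one_div, inv_pow]

lemma SG_convexOn : ConvexOn ℝ (Set.Ioi (0:ℝ)) SG := by
  apply convexOn_of_tendsto (convex_Ioi 0)
    (f := fun N x => ∑ k ∈ Finset.range N,
      (1:ℝ) / (2 * (k:ℝ) + 3) * ((1 / (2 * x + 1)) ^ 2) ^ (k + 1))
    (fun N => convexOn_sum_range (convex_Ioi 0) convexOn_term N)
  intro x hx
  exact (SG_hasSum hx).tendsto_sum_nat

lemma SG_shift_convexOn (n : ℕ) :
    ConvexOn ℝ (Set.Ioi (0:ℝ)) (fun x => SG (x + n)) := by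
  let g : ℝ →ᵃ[ℝ] ℝ := AffineMap.id ℝ ℝ + AffineMap.const ℝ ℝ (n : ℝ)
  have hcomp := SG_convexOn.comp_affineMap g
  have hg : ∀ z : ℝ, g z = z + n := fun _ => rfl
  have hsub : Set.Ioi (0:ℝ) ⊆ g ⁻¹' (Set.Ioi (0:ℝ)) := by
    intro x hx
    simp only [Set.mem_preimage, Set.mem_Ioi, hg] at *
    positivity
  exact (hcomp.subset hsub (convex_Ioi 0)).congr (fun x _ => by
    simp [Function.comp_apply, hg])

lemma SMu_convexOn : ConvexOn ℝ (Set.Ioi (0:ℝ)) SMu := by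
  apply convexOn_of_tendsto (convex_Ioi 0)
    (f := fun N x => ∑ k ∈ Finset.range N, SG (x + k))
    (fun N => convexOn_sum_range (convex_Ioi 0) SG_shift_convexOn N)
  intro x hx
  exact (SMu_summable hx).hasSum.tendsto_sum_nat


noncomputable def SF (x : ℝ) : ℝ :=
  Real.sqrt (2 * π) * x ^ (x - 1/2) * Real.exp (-x) * Real.exp (SMu x)

lemma SF_pos {x : ℝ} (hx : 0 < x) : 0 < SF x := by
  unfold SF
  have := Real.rpow_pos_of_pos hx (x - 1/2)
  have := Real.sqrt_pos.mpr (show (0:ℝ) < 2 * π by positivity)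
  positivity

lemma SF_log {x : ℝ} (hx : 0 < x) :
    Real.log (SF x)
      = Real.log (Real.sqrt (2 * π)) + ((x * Real.log x - (1/2) * Real.log x) - x) + SMu x := by
  unfold SF
  have h1 : Real.sqrt (2 * π) ≠ 0 := by positivity
  have h2 : x ^ (x - 1/2) ≠ 0 := (Real.rpow_pos_of_pos hx _).ne'
  have h3 : Real.exp (-x) ≠ 0 := Real.exp_ne_zero _
  rw [Real.log_mul (by positivity) (Real.exp_ne_zero _), Real.log_mul (by positivity) h3,
    Real.log_mul h1 h2, Real.log_rpow hx, Real.log_exp, Real.log_exp]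
  ring

lemma SF_logConvex : ConvexOn ℝ (Set.Ioi (0:ℝ)) (Real.log ∘ SF) := by
  have h1 : ConvexOn ℝ (Set.Ioi (0:ℝ)) (fun x : ℝ => x * Real.log x) :=
    (Real.convexOn_mul_log).subset (Set.Ioi_subset_Ici_self) (convex_Ioi 0)
  have h2 : ConvexOn ℝ (Set.Ioi (0:ℝ)) (fun x : ℝ => -((1/2) * Real.log x)) := by
    have := ((strictConcaveOn_log_Ioi.concaveOn).smul
      (show (0:ℝ) ≤ 1/2 by norm_num)).neg
    exact this.congr (fun x _ => by simp [smul_eq_mul])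
  have h3 : ConvexOn ℝ (Set.Ioi (0:ℝ))
      (fun x : ℝ => Real.log (Real.sqrt (2 * π)) + ((x * Real.log x - (1/2) * Real.log x) - x)
        + SMu x) := by
    have hid : ConcaveOn ℝ (Set.Ioi (0:ℝ)) (fun x : ℝ => x) :=
      (concaveOn_id (convex_Ioi 0))
    have hb : ConvexOn ℝ (Set.Ioi (0:ℝ))
        (fun x : ℝ => x * Real.log x - (1/2) * Real.log x) := by
      exact (h1.add h2).congr (fun x _ => by simp [Pi.add_apply]; ring)
    have hbc : ConvexOn ℝ (Set.Ioi (0:ℝ))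
        (fun x : ℝ => (x * Real.log x - (1/2) * Real.log x) - x) := hb.sub hid
    exact ((convexOn_const _ (convex_Ioi 0)).add hbc).add SMu_convexOn
  exact h3.congr (fun x hx => by
    simp only [Set.mem_Ioi] at hx
    simp [Function.comp_apply, SF_log hx])

lemma SG_alt {y : ℝ} (hy : 0 < y) :
    SG y = (y + 1/2) * (Real.log (y + 1) - Real.log y) - 1 := by
  unfold SG
  rw [show (1:ℝ) + y⁻¹ = (y + 1)/y by field_simp, Real.log_div (by positivity) hy.ne']

lemma SF_feq {y : ℝ} (hy : 0 < y) : SF (y + 1) = y * SF y := by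
  have h1 : 0 < SF (y + 1) := SF_pos (by linarith)
  have h2 : 0 < y * SF y := mul_pos hy (SF_pos hy)
  rw [← Real.exp_log h1, ← Real.exp_log h2]
  congr 1
  rw [SF_log (by linarith : (0:ℝ) < y + 1), Real.log_mul hy.ne' (SF_pos hy).ne', SF_log hy,
    SMu_rec hy, SG_alt hy]
  ring

lemma SF_one : SF 1 = 1 := by
  have h := SF_log one_pos
  rw [SMu_one, Real.log_one, Real.log_sqrt (by positivity : (0:ℝ) ≤ 2 * π)] at h
  have : Real.log (SF 1) = 0 := by rw [h]; ring
  have := congrArg Real.exp this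
  rwa [Real.exp_log (SF_pos one_pos), Real.exp_zero] at this

lemma SF_eq_Gamma {x : ℝ} (hx : 0 < x) : Real.Gamma x = SF x := by
  have h := Real.eq_Gamma_of_log_convex SF_logConvex
    (fun {y} hy => SF_feq hy) (fun {y} hy => SF_pos hy) SF_one
  exact (h (Set.mem_Ioi.mpr hx)).symm

theorem gamma_stirling_strict_bounds (x : ℝ) (hx : 0 < x) :
    Real.sqrt (2 * Real.pi) * x ^ (x - 1/2) * Real.exp (-x) < Real.Gamma x ∧
    Real.Gamma x <
      Real.sqrt (2 * Real.pi) * x ^ (x - 1/2) * Real.exp (-x) * Real.exp (1 / (12 * x)) := by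
  have hbase : 0 < Real.sqrt (2 * Real.pi) * x ^ (x - 1/2) * Real.exp (-x) := by
    have := Real.rpow_pos_of_pos hx (x - 1/2)
    have := Real.sqrt_pos.mpr (show (0:ℝ) < 2 * Real.pi by positivity)
    positivity
  rw [SF_eq_Gamma hx]
  unfold SF
  constructor
  · have h1 : 1 < Real.exp (SMu x) := by
      rw [← Real.exp_zero]
      exact Real.exp_lt_exp.mpr (SMu_pos hx)
    nlinarith
  · have h := Real.exp_lt_exp.mpr (SMu_lt hx)
    nlinarith [Real.exp_pos (SMu x)]
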